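/- The postorder rearrangement τ_N maps the complete subtree T^N_{ℓ,0} = {I ∈ D_N : I ⊆ I_{ℓ,0}} bijectively onto D_{N−ℓ} (the set of dyadic intervals of length ≥ 2^{−(N−ℓ)}), hence ⟦τ_N(T^N_{ℓ,0})⟧ = N − ℓ + 1. -/

import Mathlib

open Finset

/-- The set of dyadic intervals in `[0,1]` of length `≥ 2^{-N}`, encoded as
pairs `(ℓ, k)` with `ℓ ≤ N` and `k < 2^ℓ`, representing `I_{ℓ,k} = [k/2^ℓ, (k+1)/2^ℓ)`. -/
def DN (N : ℕ) : Finset (ℕ × ℕ) :=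
  (Finset.range (N + 1) ×ˢ Finset.range (2 ^ N)).filter fun p => p.2 < 2 ^ p.1

/-- `subInt q p` means the dyadic interval encoded by `q` is contained in the one
encoded by `p`. -/
def subInt (q p : ℕ × ℕ) : Prop := p.1 ≤ q.1 ∧ q.2 / 2 ^ (q.1 - p.1) = p.2

instance (q p : ℕ × ℕ) : Decidable (subInt q p) :=
  inferInstanceAs (Decidable (_ ∧ _))

/-- Postorder on dyadic intervals: `q ⪯ p` iff `q ⊆ p`, or they are disjoint with
`q` to the left of `p`. -/
def postLE (q p : ℕ × ℕ) : Prop :=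
  subInt q p ∨ (q.2 + 1) * 2 ^ p.1 ≤ p.2 * 2 ^ q.1

instance (q p : ℕ × ℕ) : Decidable (postLE q p) :=
  inferInstanceAs (Decidable (_ ∨ _))

/-- Lexicographic order: first by level, then by position. -/
def lexLE (q p : ℕ × ℕ) : Prop := q.1 < p.1 ∨ (q.1 = p.1 ∧ q.2 ≤ p.2)

instance (q p : ℕ × ℕ) : Decidable (lexLE q p) :=
  inferInstanceAs (Decidable (_ ∨ _))

/-- Postorder ordinal number (starting at 1) of the interval `p` in `D_N`. -/
def postOrdinal (N : ℕ) (p : ℕ × ℕ) : ℕ :=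
  ((DN N).filter fun q => postLE q p).card

/-- Lexicographic ordinal number (starting at 1) of the interval `p` in `D_N`. -/
def lexOrdinal (N : ℕ) (p : ℕ × ℕ) : ℕ :=
  ((DN N).filter fun q => lexLE q p).card

/-- Length of the dyadic interval encoded by `p`: `2^{-ℓ}`. -/
noncomputable def len (p : ℕ × ℕ) : ℝ := (2 : ℝ)⁻¹ ^ p.1

/-- Carleson constant of a finite collection of (encoded) dyadic intervals;
`sSup ∅ = 0` in `ℝ`, so the empty collection gets `0`. -/
noncomputable def carleson (C : Finset (ℕ × ℕ)) : ℝ :=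
  sSup {v : ℝ | ∃ p ∈ C, v = (∑ q ∈ C.filter (fun q => subInt q p), len q) / len p}

/-- The complete dyadic subtree `T^N_{ℓ,k} = {I ∈ D_N : I ⊆ I_{ℓ,k}}`. -/
def subtreeT (N ℓ k : ℕ) : Finset (ℕ × ℕ) :=
  (DN N).filter fun q => subInt q (ℓ, k)
section Aux

lemma two_pow_mul_sub {a b : ℕ} (h : b ≤ a) : (2:ℕ)^b * 2^(a-b) = 2^a := by
  rw [← pow_add]; congr 1; omega

lemma mem_DN {M : ℕ} {p : ℕ × ℕ} : p ∈ DN M ↔ p.1 ≤ M ∧ p.2 < 2 ^ p.1 := by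
  simp only [DN, mem_filter, mem_product, mem_range]
  constructor
  · rintro ⟨⟨h1, _⟩, h3⟩; exact ⟨by omega, h3⟩
  · rintro ⟨h1, h2⟩
    exact ⟨⟨by omega, lt_of_lt_of_le h2 (Nat.pow_le_pow_right (by norm_num) h1)⟩, h2⟩

lemma DN_mono {a b : ℕ} (h : a ≤ b) : DN a ⊆ DN b := by
  intro p hp
  rw [mem_DN] at hp ⊢
  exact ⟨hp.1.trans h, hp.2⟩

lemma subInt_trans {r p s : ℕ × ℕ} (h1 : subInt r p) (h2 : subInt p s) : subInt r s := by
  obtain ⟨ha, hb⟩ := h1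
  obtain ⟨hc, hd⟩ := h2
  refine ⟨hc.trans ha, ?_⟩
  have he : r.1 - s.1 = (r.1 - p.1) + (p.1 - s.1) := by omega
  rw [he, pow_add, ← Nat.div_div_eq_div_mul, hb, hd]

lemma div_pow_eq_zero_iff {a b : ℕ} : a / 2 ^ b = 0 ↔ a < 2 ^ b :=
  by rw [Nat.div_eq_zero_iff]; exact or_iff_right (Nat.two_pow_pos b).ne'

lemma left_subInt_zero {r p : ℕ × ℕ} {ℓ : ℕ}
    (h1 : (r.2 + 1) * 2 ^ p.1 ≤ p.2 * 2 ^ r.1) (h2 : subInt p (ℓ, 0)) :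
    subInt r (ℓ, 0) := by
  obtain ⟨ha, hb⟩ := h2
  have hp2 : p.2 < 2 ^ (p.1 - ℓ) := div_pow_eq_zero_iff.mp hb
  have key : (r.2 + 1) * 2 ^ p.1 < 2 ^ (p.1 - ℓ) * 2 ^ r.1 :=
    lt_of_le_of_lt h1 ((Nat.mul_lt_mul_right (Nat.two_pow_pos _)).mpr hp2)
  have hr1 : ℓ ≤ r.1 := by
    by_contra hr
    have h3 : (2:ℕ) ^ (p.1 - ℓ) * 2 ^ r.1 = 2 ^ (p.1 - ℓ + r.1) := (pow_add 2 _ _).symm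
    have h4 : (2:ℕ) ^ (p.1 - ℓ + r.1) ≤ 2 ^ p.1 := Nat.pow_le_pow_right two_pos (by omega)
    have h5 : (2:ℕ) ^ p.1 ≤ (r.2 + 1) * 2 ^ p.1 := Nat.le_mul_of_pos_left _ (by omega)
    have := calc (r.2 + 1) * 2 ^ p.1 < 2 ^ (p.1 - ℓ) * 2 ^ r.1 := key
      _ = 2 ^ (p.1 - ℓ + r.1) := h3
      _ ≤ 2 ^ p.1 := h4
      _ ≤ (r.2 + 1) * 2 ^ p.1 := h5
    exact lt_irrefl _ this
  refine ⟨hr1, div_pow_eq_zero_iff.mpr ?_⟩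
  have h6 : (2:ℕ) ^ (p.1 - ℓ) * 2 ^ r.1 = 2 ^ (r.1 - ℓ) * 2 ^ p.1 := by
    rw [← pow_add, ← pow_add]; congr 1; omega
  rw [h6] at key
  have h7 := Nat.lt_of_mul_lt_mul_right key
  show r.2 < 2 ^ (r.1 - ℓ)
  omega

end Aux
lemma decomp (M : ℕ) (p : ℕ × ℕ) (hm : p.1 ≤ M) (hk : p.2 < 2 ^ p.1) :
    (DN M).filter (fun q => subInt q p) =
      (Finset.Icc p.1 M).biUnion
        (fun j => (Finset.Ico (p.2 * 2 ^ (j - p.1)) ((p.2 + 1) * 2 ^ (j - p.1))).image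
          (fun t => (j, t))) := by
  ext ⟨j, t⟩
  simp only [mem_filter, mem_DN, mem_biUnion, mem_Icc, mem_image, mem_Ico, Prod.mk.injEq]
  constructor
  · rintro ⟨⟨hj, ht⟩, hs, hd⟩
    refine ⟨j, ⟨hs, hj⟩, t, ⟨?_, ?_⟩, rfl, rfl⟩
    · calc p.2 * 2 ^ (j - p.1) = t / 2 ^ (j - p.1) * 2 ^ (j - p.1) := by rw [hd]
        _ ≤ t := Nat.div_mul_le_self _ _
    · have h1 := Nat.div_add_mod t (2 ^ (j - p.1))
      have h2 := Nat.mod_lt t (Nat.two_pow_pos (j - p.1))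
      have hd' : t / 2 ^ (j - p.1) = p.2 := hd
      nlinarith [h1, h2, hd']
  · rintro ⟨j', ⟨hj1, hj2⟩, t', ⟨ht1, ht2⟩, rfl, rfl⟩
    have htj : t' < 2 ^ j' := by
      calc t' < (p.2 + 1) * 2 ^ (j' - p.1) := ht2
        _ ≤ 2 ^ p.1 * 2 ^ (j' - p.1) := Nat.mul_le_mul_right _ (by omega)
        _ = 2 ^ j' := two_pow_mul_sub hj1
    refine ⟨⟨hj2, htj⟩, hj1, Nat.div_eq_of_lt_le ht1 (by simpa [Nat.succ_mul] using ht2)⟩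

lemma pairwise_disj (f : ℕ → Finset ℕ) (s : Finset ℕ) :
    (s : Set ℕ).PairwiseDisjoint (fun j => (f j).image (fun t => (j, t))) := by
  intro a _ b _ hab
  simp only [Finset.disjoint_left, Function.onFun]
  rintro ⟨x, y⟩ hx hy
  simp only [mem_image, Prod.mk.injEq] at hx hy
  obtain ⟨t1, _, h1, _⟩ := hx
  obtain ⟨t2, _, h2, _⟩ := hy
  exact hab (h1.trans h2.symm)

lemma sum_len_subtree (M : ℕ) (p : ℕ × ℕ) (hm : p.1 ≤ M) (hk : p.2 < 2 ^ p.1) :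
    ∑ q ∈ (DN M).filter (fun q => subInt q p), len q
      = ((M : ℝ) - p.1 + 1) * (2 : ℝ)⁻¹ ^ p.1 := by
  rw [decomp M p hm hk, Finset.sum_biUnion (pairwise_disj _ _)]
  have hterm : ∀ j ∈ Finset.Icc p.1 M,
      (∑ q ∈ (Finset.Ico (p.2 * 2 ^ (j - p.1)) ((p.2 + 1) * 2 ^ (j - p.1))).image
        (fun t => (j, t)), len q) = (2 : ℝ)⁻¹ ^ p.1 := by
    intro j hj
    rw [mem_Icc] at hj
    rw [Finset.sum_image (by intro a _ b _ h; simpa using h)]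
    have hl : ∀ t, len (j, t) = (2 : ℝ)⁻¹ ^ j := fun t => rfl
    rw [Finset.sum_congr rfl (fun t _ => hl t), Finset.sum_const, Nat.card_Ico]
    have hcard : (p.2 + 1) * 2 ^ (j - p.1) - p.2 * 2 ^ (j - p.1) = 2 ^ (j - p.1) := by
      rw [add_one_mul, Nat.add_sub_cancel_left]
    rw [hcard, nsmul_eq_mul]
    have hsplit : (2 : ℝ)⁻¹ ^ j = (2 : ℝ)⁻¹ ^ (j - p.1) * 2⁻¹ ^ p.1 := by
      rw [← pow_add]
      have : j - p.1 + p.1 = j := by omega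
      rw [this]
    rw [hsplit]
    push_cast
    rw [← mul_assoc, ← mul_pow]
    norm_num
  rw [Finset.sum_congr rfl hterm, Finset.sum_const, Nat.card_Icc, nsmul_eq_mul]
  congr 1
  rw [Nat.cast_sub (by omega : p.1 ≤ M + 1)]
  push_cast
  ring
lemma filter_subInt_zero (M : ℕ) :
    (DN M).filter (fun q => subInt q ((0 : ℕ), (0 : ℕ))) = DN M := by
  apply Finset.filter_true_of_mem
  intro q hq
  rw [mem_DN] at hq
  exact ⟨Nat.zero_le _, by simpa using div_pow_eq_zero_iff.mpr hq.2⟩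

lemma sum_len_DN (M : ℕ) : ∑ q ∈ DN M, len q = (M : ℝ) + 1 := by
  have := sum_len_subtree M (0, 0) (Nat.zero_le _) (by norm_num)
  rw [filter_subInt_zero] at this
  simpa using this

lemma sum_two_pow (n : ℕ) : ∑ i ∈ Finset.range n, 2 ^ i = 2 ^ n - 1 := by
  induction n with
  | zero => simp
  | succ n ih =>
    rw [Finset.sum_range_succ, ih, pow_succ]
    have : 1 ≤ 2 ^ n := Nat.one_le_two_pow
    omega

lemma card_subtree (M : ℕ) (p : ℕ × ℕ) (hm : p.1 ≤ M) (hk : p.2 < 2 ^ p.1) :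
    ((DN M).filter (fun q => subInt q p)).card = 2 ^ (M - p.1 + 1) - 1 := by
  rw [decomp M p hm hk, Finset.card_biUnion]
  · have hterm : ∀ j ∈ Finset.Icc p.1 M,
        ((Finset.Ico (p.2 * 2 ^ (j - p.1)) ((p.2 + 1) * 2 ^ (j - p.1))).image
          (fun t => (j, t))).card = 2 ^ (j - p.1) := by
      intro j _
      rw [Finset.card_image_of_injective _ (fun a b h => by simpa using h), Nat.card_Ico,
        add_one_mul, Nat.add_sub_cancel_left]
    rw [Finset.sum_congr rfl hterm]
    rw [show Finset.Icc p.1 M = Finset.map ⟨fun i => i + p.1, add_left_injective p.1⟩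
        (Finset.range (M - p.1 + 1)) from ?_]
    · rw [Finset.sum_map]
      simp only [Function.Embedding.coeFn_mk, Nat.add_sub_cancel]
      exact sum_two_pow _
    · ext x
      simp only [Finset.mem_Icc, Finset.mem_map, Finset.mem_range,
        Function.Embedding.coeFn_mk]
      constructor
      · intro h; exact ⟨x - p.1, by omega, by omega⟩
      · rintro ⟨i, hi, rfl⟩; omega
  · intro a ha b hb hab
    exact pairwise_disj (fun j => Finset.Ico (p.2 * 2 ^ (j - p.1)) ((p.2 + 1) * 2 ^ (j - p.1)))
      (Finset.Icc p.1 M) ha hb hab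

lemma card_DN (M : ℕ) : (DN M).card = 2 ^ (M + 1) - 1 := by
  have := card_subtree M (0, 0) (Nat.zero_le _) (by norm_num)
  rw [filter_subInt_zero] at this
  simpa using this

lemma carleson_DN (M : ℕ) : carleson (DN M) = (M : ℝ) + 1 := by
  unfold carleson
  apply IsGreatest.csSup_eq
  constructor
  · refine ⟨(0, 0), ?_, ?_⟩
    · rw [mem_DN]; exact ⟨Nat.zero_le _, by norm_num⟩
    · rw [filter_subInt_zero, sum_len_DN]
      simp [len]
  · rintro v ⟨p, hp, rfl⟩
    rw [mem_DN] at hp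
    rw [sum_len_subtree M p hp.1 hp.2]
    have hlen : len p = (2 : ℝ)⁻¹ ^ p.1 := rfl
    rw [hlen, mul_div_assoc, div_self (by positivity), mul_one]
    have : (0 : ℝ) ≤ p.1 := Nat.cast_nonneg _
    linarith
lemma post_le_of_mem (N ℓ : ℕ) {p : ℕ × ℕ} (hp : p ∈ subtreeT N ℓ 0) :
    postOrdinal N p ≤ (subtreeT N ℓ 0).card := by
  apply Finset.card_le_card
  intro r hr
  rw [Finset.mem_filter] at hr
  obtain ⟨hrD, hrp⟩ := hr
  rw [subtreeT, Finset.mem_filter] at hp ⊢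
  refine ⟨hrD, ?_⟩
  rcases hrp with hsub | hleft
  · exact subInt_trans hsub hp.2
  · exact left_subInt_zero hleft hp.2

lemma lex_mem_of_le (N N' : ℕ) (hN' : N' ≤ N) (q : ℕ × ℕ) (hq : q ∈ DN N)
    (h : lexOrdinal N q ≤ (DN N').card) : q ∈ DN N' := by
  by_contra hq'
  rw [mem_DN] at hq
  have hgt : N' < q.1 := by
    rcases Nat.lt_or_ge N' q.1 with h1 | h1
    · exact h1
    · exact absurd (mem_DN.mpr ⟨h1, hq.2⟩) hq'
  have hsub : insert q (DN N') ⊆ (DN N).filter (fun r => lexLE r q) := by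
    intro r hr
    rw [Finset.mem_insert] at hr
    rw [Finset.mem_filter]
    rcases hr with rfl | hr
    · exact ⟨mem_DN.mpr hq, Or.inr ⟨rfl, le_rfl⟩⟩
    · have hr1 := (mem_DN.mp hr).1
      exact ⟨DN_mono hN' hr, Or.inl (by omega)⟩
  have hcard := Finset.card_le_card hsub
  rw [Finset.card_insert_of_notMem hq'] at hcard
  unfold lexOrdinal at h
  omega

/-- The postorder rearrangement `τ_N` (the bijection of `D_N` sending the `n`-th
interval in postorder to the `n`-th interval in lexicographic order) maps the
subtree `T^N_{ℓ,0}` bijectively onto `D_{N-ℓ}`; hence `⟦τ_N(T^N_{ℓ,0})⟧ = N - ℓ + 1`. -/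
theorem tau_subtree_left (N ℓ : ℕ) (hℓ : ℓ ≤ N) (τ : ℕ × ℕ → ℕ × ℕ)
    (hbij : Set.BijOn τ (DN N) (DN N))
    (hτ : ∀ p ∈ DN N, lexOrdinal N (τ p) = postOrdinal N p) :
    (subtreeT N ℓ 0).image τ = DN (N - ℓ) ∧
    carleson ((subtreeT N ℓ 0).image τ) = (N : ℝ) - ℓ + 1 := by
  have hTsub : subtreeT N ℓ 0 ⊆ DN N := Finset.filter_subset _ _
  have hcardT : (subtreeT N ℓ 0).card = (DN (N - ℓ)).card := by
    show ((DN N).filter (fun q => subInt q (ℓ, 0))).card = _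
    rw [card_subtree N (ℓ, 0) hℓ (Nat.two_pow_pos _), card_DN]
  have himgsub : ∀ p ∈ subtreeT N ℓ 0, τ p ∈ DN (N - ℓ) := by
    intro p hp
    have hpD : p ∈ DN N := hTsub hp
    have hτp : τ p ∈ DN N := Finset.mem_coe.mp (hbij.mapsTo (Finset.mem_coe.mpr hpD))
    apply lex_mem_of_le N (N - ℓ) (Nat.sub_le _ _) _ hτp
    rw [hτ p hpD]
    exact le_trans (post_le_of_mem N ℓ hp) (le_of_eq hcardT)
  have himg : (subtreeT N ℓ 0).image τ = DN (N - ℓ) := by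
    apply Finset.eq_of_subset_of_card_le
    · intro x hx
      obtain ⟨p, hp, rfl⟩ := Finset.mem_image.mp hx
      exact himgsub p hp
    · rw [Finset.card_image_of_injOn (hbij.injOn.mono (Finset.coe_subset.mpr hTsub))]
      exact le_of_eq hcardT.symm
  refine ⟨himg, ?_⟩
  rw [himg, carleson_DN, Nat.cast_sub hℓ]
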